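/- Let H be the subgroup of SL(2,ℂ) consisting of upper triangular matrices (matrices of the form [[a, b], [0, a⁻¹]] with a ∈ ℂ×, b ∈ ℂ). If K is a subgroup of SL(2,ℂ) with H ⊆ K and K ≠ H, then K = SL(2,ℂ). -/

import Mathlib

set_option linter.unnecessarySeqFocus false

open Matrix

noncomputable section BorelAux

private def SL2 := Matrix.SpecialLinearGroup (Fin 2) ℂ

/-- unipotent upper triangular -/
private def ut (b : ℂ) : Matrix.SpecialLinearGroup (Fin 2) ℂ :=
  ⟨!![1, b; 0, 1], by simp [Matrix.det_fin_two_of]⟩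

/-- diagonal -/
private def dg (a : ℂ) (ha : a ≠ 0) : Matrix.SpecialLinearGroup (Fin 2) ℂ :=
  ⟨!![a, 0; 0, a⁻¹], by simp [Matrix.det_fin_two_of, mul_inv_cancel₀ ha]⟩

/-- Weyl element -/
private def wy : Matrix.SpecialLinearGroup (Fin 2) ℂ :=
  ⟨!![0, -1; 1, 0], by simp [Matrix.det_fin_two_of]⟩

private lemma key (x : Matrix.SpecialLinearGroup (Fin 2) ℂ)
    (hc : (x : Matrix (Fin 2) (Fin 2) ℂ) 1 0 ≠ 0) :
    dg ((x : Matrix (Fin 2) (Fin 2) ℂ) 1 0) hc *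
      ut (-(x : Matrix (Fin 2) (Fin 2) ℂ) 0 0 / (x : Matrix (Fin 2) (Fin 2) ℂ) 1 0) * x *
      ut (-(x : Matrix (Fin 2) (Fin 2) ℂ) 1 1 / (x : Matrix (Fin 2) (Fin 2) ℂ) 1 0) = wy := by
  set a := (x : Matrix (Fin 2) (Fin 2) ℂ) 0 0
  set b := (x : Matrix (Fin 2) (Fin 2) ℂ) 0 1
  set c := (x : Matrix (Fin 2) (Fin 2) ℂ) 1 0
  set d := (x : Matrix (Fin 2) (Fin 2) ℂ) 1 1
  have hdet : a * d - b * c = 1 := by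
    have := x.2
    rw [Matrix.det_fin_two] at this
    exact this
  ext i j
  fin_cases i <;> fin_cases j <;>
    simp only [Matrix.SpecialLinearGroup.coe_mul] <;>
    simp [ut, dg, wy, Matrix.mul_apply, Matrix.vecMul, dotProduct, Fin.sum_univ_two, a, b, c, d] <;>
    field_simp <;> simp only [a, b, c, d] at hdet ⊢ <;> grind

end BorelAux

/-- The upper triangular (Borel) subgroup of `SL(2,ℂ)` is a maximal subgroup:
any subgroup containing it, together with some element not in it, is everything. -/
theorem borel_maximal_in_SL2
    (K : Subgroup (Matrix.SpecialLinearGroup (Fin 2) ℂ))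
    (hHK : ∀ g : Matrix.SpecialLinearGroup (Fin 2) ℂ, (g : Matrix (Fin 2) (Fin 2) ℂ) 1 0 = 0 → g ∈ K)
    (hne : ∃ g ∈ K, (g : Matrix (Fin 2) (Fin 2) ℂ) 1 0 ≠ 0) :
    K = ⊤ := by
  have hut : ∀ b : ℂ, ut b ∈ K := fun b => hHK _ (by simp [ut])
  have hdg : ∀ (a : ℂ) (ha : a ≠ 0), dg a ha ∈ K := fun a ha => hHK _ (by simp [dg])
  have hw : wy ∈ K := by
    obtain ⟨g, hgK, hgc⟩ := hne
    rw [← key g hgc]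
    exact mul_mem (mul_mem (mul_mem (hdg _ hgc) (hut _)) hgK) (hut _)
  ext x
  simp only [Subgroup.mem_top, iff_true]
  by_cases hc : (x : Matrix (Fin 2) (Fin 2) ℂ) 1 0 = 0
  · exact hHK x hc
  · have h := key x hc
    have hx : x = (ut (-(x : Matrix (Fin 2) (Fin 2) ℂ) 0 0 / (x : Matrix (Fin 2) (Fin 2) ℂ) 1 0))⁻¹ *
        (dg ((x : Matrix (Fin 2) (Fin 2) ℂ) 1 0) hc)⁻¹ * wy *
        (ut (-(x : Matrix (Fin 2) (Fin 2) ℂ) 1 1 / (x : Matrix (Fin 2) (Fin 2) ℂ) 1 0))⁻¹ := by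
      rw [← h]; group
    rw [hx]
    exact mul_mem (mul_mem (mul_mem (inv_mem (hut _)) (inv_mem (hdg _ hc))) hw) (inv_mem (hut _))
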